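/- Let T be a finite tree of diameter d with diametrical path P = v₀v₁⋯v_d containing all central vertices of T, and for 1 ≤ i ≤ d−1 let T_{v_i} be the maximal subtree of T rooted at v_i meeting the path only in v_i. Then for every vertex u ∈ V(T_{v_i}), ε₃(u;T) = d_T(u, v_i) + ε₃(v_i;T). -/

import Mathlib

open SimpleGraph Finset

variable {V : Type*}

/-- The Fermat distance of a vertex triple: minimum over all vertices σ of
    `d(σ,u) + d(σ,v) + d(σ,w)`. -/
noncomputable def fermatDist (G : SimpleGraph V) (u v w : V) : ℕ :=
  ⨅ σ : V, (G.dist σ u + G.dist σ v + G.dist σ w)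

/-- The Fermat eccentricity `ε₃(u;G)`: maximum Fermat distance of triples containing `u`. -/
noncomputable def fermatEcc [Fintype V] (G : SimpleGraph V) (u : V) : ℕ :=
  Finset.univ.sup fun p : V × V => fermatDist G u p.1 p.2

/-- The ordinary eccentricity `ε₂(u;G)`. -/
noncomputable def ecc2 [Fintype V] (G : SimpleGraph V) (u : V) : ℕ :=
  Finset.univ.sup fun v => G.dist u v

/-- The diameter of `G`. -/
noncomputable def gdiam [Fintype V] (G : SimpleGraph V) : ℕ :=
  Finset.univ.sup fun p : V × V => G.dist p.1 p.2

/-- A central vertex: one minimizing the ordinary eccentricity. -/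
def isCentral [Fintype V] (G : SimpleGraph V) (c : V) : Prop :=
  ∀ u : V, ecc2 G c ≤ ecc2 G u

/-- The number of edges of `G`. -/
noncomputable def numEdges [Fintype V] (G : SimpleGraph V) : ℕ :=
  letI := Classical.decEq V
  letI := Classical.decRel G.Adj
  G.edgeFinset.card

/-- The first Zagreb–Fermat eccentricity index `F₁(G) = Σ_u ε₃(u)²`. -/
noncomputable def F1 [Fintype V] (G : SimpleGraph V) : ℕ :=
  ∑ u : V, (fermatEcc G u) ^ 2

/-- The second Zagreb–Fermat eccentricity index `F₂(G) = Σ_{uv ∈ E} ε₃(u)·ε₃(v)`. -/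
noncomputable def F2 [Fintype V] (G : SimpleGraph V) : ℕ :=
  letI := Classical.decEq V
  letI := Classical.decRel G.Adj
  ∑ e ∈ G.edgeFinset,
    Sym2.lift ⟨fun u v => fermatEcc G u * fermatEcc G v, fun _ _ => mul_comm _ _⟩ e

/-- `u` lies in the subtree `T_{v_i}` hanging off the `i`-th vertex of the path `P`:
its geodesic to every vertex of `P` passes through `P.getVert i`. -/
def inSubtree (G : SimpleGraph V) {a b : V} (P : G.Walk a b) (i : ℕ) (u : V) : Prop :=
  ∀ j ≤ P.length, G.dist u (P.getVert j) = G.dist u (P.getVert i) + G.dist (P.getVert i) (P.getVert j)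

/-- `ℓ_i`: the height of the subtree `T_{v_i}`. -/
noncomputable def subtreeHeight [Fintype V] (G : SimpleGraph V) {a b : V} (P : G.Walk a b)
    (i : ℕ) : ℕ :=
  letI := Classical.decPred (inSubtree G P i)
  Finset.univ.sup fun u => if inSubtree G P i u then G.dist (P.getVert i) u else 0

section TreeMetric

variable {T : SimpleGraph V}

private lemma tree_path_length (hT : T.IsTree) {x y : V} {p : T.Walk x y} (hp : p.IsPath) :
    p.length = T.dist x y := by
  classical
  obtain ⟨q, hq, hql⟩ := hT.isConnected.exists_path_of_dist x y
  have hqp : q = p := (hT.existsUnique_path x y).unique hq hp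
  rw [← hqp, hql]

private lemma btw_of_mem (hT : T.IsTree) {x y m : V} {p : T.Walk x y} (hp : p.IsPath)
    (hm : m ∈ p.support) : T.dist x m + T.dist m y = T.dist x y := by
  classical
  have h1 := tree_path_length hT (hp.takeUntil hm)
  have h2 := tree_path_length hT (hp.dropUntil hm)
  have h3 := tree_path_length hT hp
  have h4 : (p.takeUntil m hm).length + (p.dropUntil m hm).length = p.length := by
    rw [← Walk.length_append, Walk.take_spec]
  omega

private lemma isPath_append_of_inter {x m y : V} {p : T.Walk x m} {q : T.Walk m y}
    (hp : p.IsPath) (hq : q.IsPath)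
    (h : ∀ w, w ∈ p.support → w ∈ q.support → w = m) :
    (p.append q).IsPath := by
  rw [Walk.isPath_def, Walk.support_append, List.nodup_append]
  refine ⟨hp.support_nodup, ?_, ?_⟩
  · have := hq.support_nodup
    rw [Walk.support_eq_cons q] at this
    exact (List.nodup_cons.mp this).2
  · intro w hwp b hb hwb
    have hwt : w ∈ q.support.tail := by rw [hwb]; exact hb
    have hwq : w ∈ q.support := by
      rw [Walk.support_eq_cons q]; exact List.mem_cons_of_mem _ hwt
    have hwm : w = m := h w hwp hwq
    subst hwm
    have hnd := hq.support_nodup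
    rw [Walk.support_eq_cons q] at hnd
    exact (List.nodup_cons.mp hnd).1 hwt

private lemma mem_support_of_btw (hT : T.IsTree) {x y m : V} {p : T.Walk x y} (hp : p.IsPath)
    (hd : T.dist x m + T.dist m y = T.dist x y) : m ∈ p.support := by
  obtain ⟨q₁, hq₁, hl₁⟩ := hT.isConnected.exists_path_of_dist x m
  obtain ⟨q₂, hq₂, hl₂⟩ := hT.isConnected.exists_path_of_dist m y
  have hap : (q₁.append q₂).IsPath := by
    refine isPath_append_of_inter hq₁ hq₂ ?_
    intro a ha1 ha2
    have e1 := btw_of_mem hT hq₁ ha1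
    have e2 := btw_of_mem hT hq₂ ha2
    have tri := hT.isConnected.dist_triangle (u := x) (v := a) (w := y)
    have c1 : T.dist a m = T.dist m a := SimpleGraph.dist_comm
    have hzero : T.dist m a = 0 := by omega
    exact ((hT.isConnected.dist_eq_zero_iff).mp hzero).symm
  have heq : q₁.append q₂ = p := (hT.existsUnique_path x y).unique hap hp
  rw [← heq, Walk.mem_support_append_iff]
  exact Or.inl q₁.end_mem_support

private lemma fork (hT : T.IsTree) (x y z : V) :
    ∃ m : V, T.dist x m + T.dist m y = T.dist x y ∧ T.dist x m + T.dist m z = T.dist x z ∧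
      T.dist y m + T.dist m z = T.dist y z := by
  classical
  obtain ⟨p, hp, -⟩ := hT.isConnected.exists_path_of_dist x y
  obtain ⟨q, hq, -⟩ := hT.isConnected.exists_path_of_dist x z
  set S : Finset V := p.support.toFinset ∩ q.support.toFinset with hS
  have hxS : x ∈ S := by
    rw [hS, Finset.mem_inter, List.mem_toFinset, List.mem_toFinset]
    exact ⟨p.start_mem_support, q.start_mem_support⟩
  obtain ⟨m, hmS, hmax⟩ := S.exists_max_image (fun w => T.dist x w) ⟨x, hxS⟩
  have hmp : m ∈ p.support := by
    have := (Finset.mem_inter.mp (hS ▸ hmS)).1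
    exact List.mem_toFinset.mp this
  have hmq : m ∈ q.support := by
    have := (Finset.mem_inter.mp (hS ▸ hmS)).2
    exact List.mem_toFinset.mp this
  have e1 := btw_of_mem hT hp hmp
  have e2 := btw_of_mem hT hq hmq
  refine ⟨m, e1, e2, ?_⟩
  have hA : (p.dropUntil m hmp).IsPath := hp.dropUntil hmp
  have hB : (q.dropUntil m hmq).IsPath := hq.dropUntil hmq
  have hR : ((p.dropUntil m hmp).reverse.append (q.dropUntil m hmq)).IsPath := by
    refine isPath_append_of_inter hA.reverse hB ?_
    intro w hw1 hw2
    rw [Walk.support_reverse, List.mem_reverse] at hw1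
    have hwp : w ∈ p.support := p.support_dropUntil_subset hmp hw1
    have hwq : w ∈ q.support := q.support_dropUntil_subset hmq hw2
    have hwS : w ∈ S := by
      rw [hS, Finset.mem_inter, List.mem_toFinset, List.mem_toFinset]
      exact ⟨hwp, hwq⟩
    have hle := hmax w hwS
    have eA := btw_of_mem hT hA hw1
    have ep := btw_of_mem hT hp hwp
    have hz : T.dist m w = 0 := by omega
    exact ((hT.isConnected.dist_eq_zero_iff).mp hz).symm
  have lR := tree_path_length hT hR
  have lA := tree_path_length hT hA
  have lB := tree_path_length hT hB
  have llen : ((p.dropUntil m hmp).reverse.append (q.dropUntil m hmq)).length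
      = (p.dropUntil m hmp).length + (q.dropUntil m hmq).length := by
    rw [Walk.length_append, Walk.length_reverse]
  have cm : T.dist y m = T.dist m y := SimpleGraph.dist_comm
  omega

private lemma tree_ord (hT : T.IsTree) {z t m n : V}
    (hm : T.dist z m + T.dist m t = T.dist z t)
    (hn : T.dist z n + T.dist n t = T.dist z t)
    (hle : T.dist z m ≤ T.dist z n) :
    T.dist z m + T.dist m n = T.dist z n := by
  classical
  obtain ⟨p, hp, -⟩ := hT.isConnected.exists_path_of_dist z t
  have hmp : m ∈ p.support := mem_support_of_btw hT hp hm
  have hnp : n ∈ p.support := mem_support_of_btw hT hp hn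
  have hsplit := Walk.take_spec p hmp
  have hmem : n ∈ ((p.takeUntil m hmp).append (p.dropUntil m hmp)).support := by
    rw [hsplit]; exact hnp
  rw [Walk.mem_support_append_iff] at hmem
  rcases hmem with h1 | h2
  · have e := btw_of_mem hT (hp.takeUntil hmp) h1
    have cnm : T.dist n m = T.dist m n := SimpleGraph.dist_comm
    omega
  · have e := btw_of_mem hT (hp.dropUntil hmp) h2
    omega

private lemma four_point (hT : T.IsTree) (x y z t : V) :
    T.dist x y + T.dist z t ≤ max (T.dist x z + T.dist y t) (T.dist x t + T.dist y z) := by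
  obtain ⟨m, hm1, hm2, hm3⟩ := fork hT z t x
  obtain ⟨n, hn1, hn2, hn3⟩ := fork hT z t y
  have txy : T.dist x y ≤ T.dist x m + T.dist m y := hT.isConnected.dist_triangle
  have tmy : T.dist m y ≤ T.dist m n + T.dist n y := hT.isConnected.dist_triangle
  have c1 : T.dist x m = T.dist m x := SimpleGraph.dist_comm
  have c2 : T.dist m n = T.dist n m := SimpleGraph.dist_comm
  have c4 : T.dist x t = T.dist t x := SimpleGraph.dist_comm
  have c5 : T.dist y z = T.dist z y := SimpleGraph.dist_comm
  have c6 : T.dist x z = T.dist z x := SimpleGraph.dist_comm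
  have c7 : T.dist y t = T.dist t y := SimpleGraph.dist_comm
  have c8 : T.dist t m = T.dist m t := SimpleGraph.dist_comm
  have c9 : T.dist t n = T.dist n t := SimpleGraph.dist_comm
  rcases le_total (T.dist z m) (T.dist z n) with hle | hle
  · have hord := tree_ord hT hm1 hn1 hle
    refine le_max_of_le_right ?_
    omega
  · have hord := tree_ord hT hn1 hm1 hle
    refine le_max_of_le_left ?_
    omega

private lemma fermatDist_le (T : SimpleGraph V) (x y z σ : V) :
    fermatDist T x y z ≤ T.dist σ x + T.dist σ y + T.dist σ z :=
  ciInf_le (OrderBot.bddBelow _) σ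

private lemma fermatDist_exists (T : SimpleGraph V) [Nonempty V] (x y z : V) :
    ∃ σ, T.dist σ x + T.dist σ y + T.dist σ z = fermatDist T x y z := by
  have hmem : fermatDist T x y z ∈
      Set.range (fun σ => T.dist σ x + T.dist σ y + T.dist σ z) :=
    Nat.sInf_mem (Set.range_nonempty _)
  obtain ⟨σ, hσ⟩ := hmem
  exact ⟨σ, hσ⟩

private lemma two_fermat (hT : T.IsTree) [Nonempty V] (x y z : V) :
    2 * fermatDist T x y z = T.dist x y + T.dist y z + T.dist x z := by
  obtain ⟨m, e1, e2, e3⟩ := fork hT x y z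
  have hub := fermatDist_le T x y z m
  have cm1 : T.dist m x = T.dist x m := SimpleGraph.dist_comm
  have cm2 : T.dist m y = T.dist y m := SimpleGraph.dist_comm
  obtain ⟨σ, hσ⟩ := fermatDist_exists T x y z
  have t1 : T.dist x y ≤ T.dist σ x + T.dist σ y := by
    have tri := hT.isConnected.dist_triangle (u := x) (v := σ) (w := y)
    have c : T.dist x σ = T.dist σ x := SimpleGraph.dist_comm
    omega
  have t2 : T.dist y z ≤ T.dist σ y + T.dist σ z := by
    have tri := hT.isConnected.dist_triangle (u := y) (v := σ) (w := z)
    have c : T.dist y σ = T.dist σ y := SimpleGraph.dist_comm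
    omega
  have t3 : T.dist x z ≤ T.dist σ x + T.dist σ z := by
    have tri := hT.isConnected.dist_triangle (u := x) (v := σ) (w := z)
    have c : T.dist x σ = T.dist σ x := SimpleGraph.dist_comm
    omega
  omega

private lemma le_sup_pair {α : Type*} [Fintype α] (f : α × α → ℕ) (v w : α) :
    f (v, w) ≤ Finset.univ.sup f := Finset.le_sup (Finset.mem_univ _)

private lemma sup_pair_le {α : Type*} [Fintype α] (f : α × α → ℕ) (n : ℕ)
    (h : ∀ v w : α, f (v, w) ≤ n) : Finset.univ.sup f ≤ n :=
  Finset.sup_le fun p _ => h p.1 p.2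

private lemma exists_sup_pair {α : Type*} [Fintype α] [Nonempty α] (f : α × α → ℕ) :
    ∃ v w : α, Finset.univ.sup f = f (v, w) := by
  obtain ⟨⟨v, w⟩, -, hvw⟩ := Finset.exists_mem_eq_sup (Finset.univ : Finset (α × α))
    Finset.univ_nonempty f
  exact ⟨v, w, hvw⟩

private lemma le_fermatEcc [Fintype V] (T : SimpleGraph V) (x v w : V) :
    fermatDist T x v w ≤ fermatEcc T x :=
  le_sup_pair (fun p : V × V => fermatDist T x p.1 p.2) v w

end TreeMetric

/-- For a diametrical path `v₀v₁⋯v_d` of a finite tree containing all central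
vertices, and any vertex `u` of the subtree `T_{vᵢ}` hanging at `vᵢ` (`1 ≤ i ≤ d-1`), one has
`ε₃(u) = d(u,vᵢ) + ε₃(vᵢ)`. -/
theorem fermatEcc_in_subtree [Fintype V] (T : SimpleGraph V) (hT : T.IsTree)
    {v₀ vd : V} (P : T.Walk v₀ vd) (hP : P.IsPath) (d : ℕ) (hlen : P.length = d)
    (hdiam : d = gdiam T)
    (hcentral : ∀ c : V, isCentral T c → ∃ i ≤ d, P.getVert i = c)
    (i : ℕ) (hi1 : 1 ≤ i) (hi2 : i ≤ d - 1)
    (u : V) (hu : inSubtree T P i u) :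
    fermatEcc T u = T.dist u (P.getVert i) + fermatEcc T (P.getVert i) := by
  classical
  have hconn := hT.isConnected
  have _inst : Nonempty V := ⟨u⟩
  have hu0 : T.dist u v₀ = T.dist u (P.getVert i) + T.dist (P.getVert i) v₀ := by
    simpa using hu 0 (Nat.zero_le _)
  have hud : T.dist u vd = T.dist u (P.getVert i) + T.dist (P.getVert i) vd := by
    simpa using hu P.length le_rfl
  have dv0vd : T.dist v₀ vd = d := by
    have := tree_path_length hT hP
    omega
  have dall : ∀ x y : V, T.dist x y ≤ d := by
    intro x y
    rw [hdiam]
    exact Finset.le_sup (f := fun p : V × V => T.dist p.1 p.2) (Finset.mem_univ (x, y))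
  set c := P.getVert i with hc
  -- every vertex is within max(d(c,v₀), d(c,vd)) of c
  have key2 : ∀ x : V, T.dist c x ≤ T.dist c v₀ ∨ T.dist c x ≤ T.dist c vd := by
    intro x
    have h4 := four_point hT v₀ vd c x
    have c1 : T.dist v₀ c = T.dist c v₀ := SimpleGraph.dist_comm
    have c2 : T.dist vd c = T.dist c vd := SimpleGraph.dist_comm
    have d1 : T.dist vd x ≤ d := dall vd x
    have d2 : T.dist v₀ x ≤ d := dall v₀ x
    rcases le_max_iff.mp h4 with h' | h'
    · exact Or.inl (by omega)
    · exact Or.inr (by omega)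
  -- vertices in u's branch at c are close to c
  have hbranch : ∀ x : V, T.dist u x ≠ T.dist u c + T.dist c x →
      T.dist c x + T.dist c v₀ ≤ d ∧ T.dist c x + T.dist c vd ≤ d := by
    intro x hx
    have htri : T.dist u x ≤ T.dist u c + T.dist c x := hconn.dist_triangle
    have hlt : T.dist u x < T.dist u c + T.dist c x := lt_of_le_of_ne htri hx
    constructor
    · have h4 := four_point hT u v₀ x c
      have c1 : T.dist x c = T.dist c x := SimpleGraph.dist_comm
      have c2 : T.dist v₀ c = T.dist c v₀ := SimpleGraph.dist_comm
      have dxv : T.dist x v₀ ≤ d := dall x v₀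
      have c3 : T.dist v₀ x = T.dist x v₀ := SimpleGraph.dist_comm
      rcases le_max_iff.mp h4 with h' | h'
      · omega
      · omega
    · have h4 := four_point hT u vd x c
      have c1 : T.dist x c = T.dist c x := SimpleGraph.dist_comm
      have c2 : T.dist vd c = T.dist c vd := SimpleGraph.dist_comm
      have dxv : T.dist x vd ≤ d := dall x vd
      have c3 : T.dist vd x = T.dist x vd := SimpleGraph.dist_comm
      rcases le_max_iff.mp h4 with h' | h'
      · omega
      · omega
  obtain ⟨v, w, hEc⟩ : ∃ v w : V, fermatEcc T c = fermatDist T c v w :=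
    exists_sup_pair (fun p : V × V => fermatDist T c p.1 p.2)
  refine le_antisymm ?_ ?_
  · -- upper bound
    refine sup_pair_le (fun p : V × V => fermatDist T u p.1 p.2) _ ?_
    intro v' w'
    show fermatDist T u v' w' ≤ T.dist u c + fermatEcc T c
    obtain ⟨σ, hσ⟩ := fermatDist_exists T c v' w'
    have h1 : fermatDist T u v' w' ≤ T.dist σ u + T.dist σ v' + T.dist σ w' :=
      fermatDist_le T u v' w' σ
    have h2 : T.dist σ u ≤ T.dist σ c + T.dist c u := hconn.dist_triangle
    have h3 : T.dist c u = T.dist u c := SimpleGraph.dist_comm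
    have h4 : fermatDist T c v' w' ≤ fermatEcc T c := le_fermatEcc T c v' w'
    omega
  · -- lower bound
    have hfar : fermatEcc T c ≤ d → T.dist u c + fermatEcc T c ≤ fermatEcc T u := by
      intro hEcd
      have e := two_fermat hT u v₀ vd
      have tri : T.dist v₀ vd ≤ T.dist v₀ c + T.dist c vd := hconn.dist_triangle
      have cc : T.dist v₀ c = T.dist c v₀ := SimpleGraph.dist_comm
      have hle : fermatDist T u v₀ vd ≤ fermatEcc T u := le_fermatEcc T u v₀ vd
      omega
    have hfd : fermatDist T c v w ≤ T.dist c v + T.dist c w := by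
      have h1 := fermatDist_le T c v w c
      have h2 : T.dist c c = 0 := SimpleGraph.dist_self
      omega
    by_cases hv : T.dist u v = T.dist u c + T.dist c v
    · by_cases hw : T.dist u w = T.dist u c + T.dist c w
      · have e1 := two_fermat hT u v w
        have e2 := two_fermat hT c v w
        have hle : fermatDist T u v w ≤ fermatEcc T u := le_fermatEcc T u v w
        omega
      · obtain ⟨hA, hB⟩ := hbranch w hw
        rcases key2 v with h' | h' <;>
          · apply hfar
            rw [hEc]
            omega
    · obtain ⟨hA, hB⟩ := hbranch v hv
      rcases key2 w with h' | h' <;>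
        · apply hfar
          rw [hEc]
          omega
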